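/- Let ℓ : ℝ^n → ℝ be the log-sum-exp function ℓ(u) = log(∑_{i=1}^n exp(u_i)) and fix u ∈ ℝ^n. Define r(t) = ℓ(t·u) for t ∈ ℝ. Then lim_{t→∞} ( r'(t)·t − r(t) ) = −log(n̄), where n̄ = |{ i ∈ [n] : u_i = max_{j∈[n]} u_j }| is the number of components of u attaining the maximum value. -/

import Mathlib

open scoped Classical

open Filter Real

/-- `x * exp x → 0` as `x → -∞`. -/
lemma aux_tendsto_mul_exp_atBot :
    Tendsto (fun x : ℝ => x * Real.exp x) atBot (nhds 0) := by
  have h := (Real.tendsto_pow_mul_exp_neg_atTop_nhds_zero 1).comp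
    tendsto_neg_atBot_atTop
  have h2 : Tendsto (fun x : ℝ => -(x * Real.exp x)) atBot (nhds 0) := by
    refine h.congr fun x => ?_
    simp [neg_mul]
  have := h2.neg
  simpa using this

/-- **Limit of the perspective-depth expression along a ray for log-sum-exp.**
For `u ∈ ℝⁿ` and `r(t) = log(∑ i, exp(t·u i))`, one has
`lim_{t→∞} (r'(t)·t − r(t)) = −log n̄`, where `n̄` is the number of indices `i`
attaining the maximum `max_j u j`. -/
theorem logsumexp_ray_perspective_limit {n : ℕ} (hn : 0 < n) (u : Fin n → ℝ)
    (r : ℝ → ℝ) (hr : ∀ t, r t = Real.log (∑ i, Real.exp (t * u i)))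
    (nbar : ℕ)
    (hnbar : nbar = (Finset.univ.filter fun i : Fin n => ∀ j, u j ≤ u i).card) :
    Filter.Tendsto (fun t => deriv r t * t - r t) Filter.atTop
      (nhds (-Real.log nbar)) := by
  haveI : Nonempty (Fin n) := ⟨⟨0, hn⟩⟩
  obtain ⟨i0, hi0⟩ := Finite.exists_max u
  set M := u i0 with hM
  set v : Fin n → ℝ := fun i => u i - M with hv
  -- positivity of sums
  have hpos : ∀ t : ℝ, (0:ℝ) < ∑ i, Real.exp (t * u i) := fun t =>
    Finset.sum_pos (fun i _ => Real.exp_pos _) Finset.univ_nonempty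
  have hposv : ∀ t : ℝ, (0:ℝ) < ∑ i, Real.exp (t * v i) := fun t =>
    Finset.sum_pos (fun i _ => Real.exp_pos _) Finset.univ_nonempty
  -- derivative of r
  have hrfun : r = fun t => Real.log (∑ i, Real.exp (t * u i)) := funext hr
  subst hrfun
  have hderiv : ∀ t : ℝ, deriv (fun t => Real.log (∑ i, Real.exp (t * u i))) t
      = (∑ i, u i * Real.exp (t * u i)) / (∑ i, Real.exp (t * u i)) := by
    intro t
    have h1 : HasDerivAt (fun t => ∑ i, Real.exp (t * u i))
        (∑ i, u i * Real.exp (t * u i)) t := by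
      apply HasDerivAt.fun_sum
      intro i _
      have := ((hasDerivAt_id t).mul_const (u i)).exp
      simpa [mul_comm] using this
    exact (h1.log (ne_of_gt (hpos t))).deriv
  -- key algebraic identity
  have hkey : ∀ t : ℝ,
      deriv (fun t => Real.log (∑ i, Real.exp (t * u i))) t * t
        - Real.log (∑ i, Real.exp (t * u i))
      = (∑ i, (t * v i) * Real.exp (t * v i)) / (∑ i, Real.exp (t * v i))
        - Real.log (∑ i, Real.exp (t * v i)) := by
    intro t
    rw [hderiv t]
    have hexp : ∀ i, Real.exp (t * u i) = Real.exp (t * M) * Real.exp (t * v i) := by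
      intro i
      rw [← Real.exp_add]
      congr 1; simp only [hv]; ring
    have hA : (∑ i, Real.exp (t * u i)) = Real.exp (t * M) * ∑ i, Real.exp (t * v i) := by
      rw [Finset.mul_sum]; exact Finset.sum_congr rfl fun i _ => hexp i
    have hB : (∑ i, u i * Real.exp (t * u i))
        = Real.exp (t * M) * ((M * ∑ i, Real.exp (t * v i)) + ∑ i, v i * Real.exp (t * v i)) := by
      rw [Finset.mul_sum, mul_add, Finset.mul_sum, Finset.mul_sum, ← Finset.sum_add_distrib]
      refine Finset.sum_congr rfl fun i _ => ?_
      rw [hexp i]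
      have : u i = M + v i := by simp [hv]
      rw [this]; ring
    rw [hA, hB, Real.log_mul (ne_of_gt (Real.exp_pos _)) (ne_of_gt (hposv t)),
      Real.log_exp]
    have hAne : (∑ i, Real.exp (t * v i)) ≠ 0 := ne_of_gt (hposv t)
    have hEne : Real.exp (t * M) ≠ 0 := ne_of_gt (Real.exp_pos _)
    have hsum : (∑ i, (t * v i) * Real.exp (t * v i))
        = t * ∑ i, v i * Real.exp (t * v i) := by
      rw [Finset.mul_sum]; exact Finset.sum_congr rfl fun i _ => by ring
    rw [hsum]
    field_simp
    ring
  -- limits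
  have hvle : ∀ i, v i ≤ 0 := fun i => sub_nonpos.2 (hi0 i)
  have hmaxiff : ∀ i : Fin n, (∀ j, u j ≤ u i) ↔ v i = 0 := by
    intro i
    constructor
    · intro h; have := le_antisymm (hi0 i) (h i0); simp [hv, this]
    · intro h j; have : u i = M := by have := sub_eq_zero.1 h; linarith
      rw [this]; exact hi0 j
  -- A(t) → nbar
  have hAlim : Tendsto (fun t => ∑ i, Real.exp (t * v i)) atTop
      (nhds (nbar : ℝ)) := by
    have : Tendsto (fun t => ∑ i, Real.exp (t * v i)) atTop
        (nhds (∑ i : Fin n, if ∀ j, u j ≤ u i then (1:ℝ) else 0)) := by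
      apply tendsto_finset_sum
      intro i _
      by_cases hi : ∀ j, u j ≤ u i
      · have hv0 : v i = 0 := (hmaxiff i).1 hi
        simp only [hv0, mul_zero, Real.exp_zero, if_pos hi]
        exact tendsto_const_nhds
      · have hvlt : v i < 0 := lt_of_le_of_ne (hvle i) (fun h => hi ((hmaxiff i).2 h))
        simp only [if_neg hi]
        exact Real.tendsto_exp_atBot.comp (tendsto_id.atTop_mul_const_of_neg hvlt)
    convert this using 2
    rw [hnbar, ← Finset.sum_boole]
  have hnbarpos : (0:ℝ) < (nbar : ℝ) := by
    have : i0 ∈ Finset.univ.filter fun i : Fin n => ∀ j, u j ≤ u i := by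
      simp [hi0]
      exact hi0
    have hcard : 0 < (Finset.univ.filter fun i : Fin n => ∀ j, u j ≤ u i).card :=
      Finset.card_pos.2 ⟨i0, this⟩
    exact_mod_cast hnbar ▸ hcard
  -- B(t) → 0
  have hBlim : Tendsto (fun t => ∑ i, (t * v i) * Real.exp (t * v i)) atTop
      (nhds 0) := by
    have : Tendsto (fun t => ∑ i, (t * v i) * Real.exp (t * v i)) atTop
        (nhds (∑ _i : Fin n, (0:ℝ))) := by
      apply tendsto_finset_sum
      intro i _
      by_cases hi : ∀ j, u j ≤ u i
      · have hv0 : v i = 0 := (hmaxiff i).1 hi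
        simp only [hv0, mul_zero, zero_mul]
        exact tendsto_const_nhds
      · have hvlt : v i < 0 := lt_of_le_of_ne (hvle i) (fun h => hi ((hmaxiff i).2 h))
        exact aux_tendsto_mul_exp_atBot.comp (tendsto_id.atTop_mul_const_of_neg hvlt)
    simpa using this
  -- combine
  have hquot : Tendsto (fun t => (∑ i, (t * v i) * Real.exp (t * v i))
      / (∑ i, Real.exp (t * v i))) atTop (nhds 0) := by
    have := hBlim.div hAlim (ne_of_gt hnbarpos)
    rw [zero_div] at this
    exact this
  have hlog : Tendsto (fun t => Real.log (∑ i, Real.exp (t * v i))) atTop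
      (nhds (Real.log nbar)) :=
    (Real.continuousAt_log (ne_of_gt hnbarpos)).tendsto.comp hAlim
  have := hquot.sub hlog
  rw [zero_sub] at this
  exact this.congr fun t => (hkey t).symm
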